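/- arXiv:2301.01985 — 2 statements merged into one kernel-verified Lean document; each statement's English description precedes it below -/
import Mathlib

section
/- Let F(k) = (−1)^k A_k. For every polynomial x with rational coefficients and every integer n ≥ 1, ∑_{k=0}^{n−1} [ k^3 x(k−2) + (2k+1)(17k^2+17k+5) x(k−1) + (k+1)^3 x(k) ] · (−1)^k A_k = n^3 · ( x(n−1) F(n−1) − x(n−2) F(n) ), where x is evaluated at the indicated integers (which may be negative). -/
open Finset Polynomial

/-- The Apéry numbers `A n = ∑_{k=0}^n (n choose k)^2 ((n+k) choose k)^2`. -/
def apery (n : ℕ) : ℤ :=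
  ∑ k ∈ Finset.range (n + 1), ((n.choose k : ℤ)) ^ 2 * (((n + k).choose k : ℤ)) ^ 2

/-- `B m k = C(m,k)^2 C(m+k,k)^2` as a rational number. -/
def aperyB (m k : ℕ) : ℚ := ((m.choose k : ℚ)) ^ 2 * (((m + k).choose k : ℚ)) ^ 2

/-- Telescoping certificate. -/
def aperyG (n k : ℕ) : ℚ :=
  (k : ℚ) ^ 4 * (2 * n + 3) * (8 * (k:ℚ) ^ 2 - 12 * k - 16 * (n:ℚ) ^ 2 - 48 * n - 32) *
    (((n + 2).choose k : ℚ)) ^ 2 * (((n + k).choose k : ℚ)) ^ 2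

lemma cast_choose1 (n k : ℕ) :
    ((n : ℚ) + 1 - k) * (((n + 1).choose k : ℚ)) = ((n : ℚ) + 1) * ((n.choose k : ℚ)) := by
  rcases le_or_gt k (n + 1) with h | h
  · have h0 := Nat.choose_mul_succ_eq n k
    have h1 : ((n.choose k * (n + 1) : ℕ) : ℚ) = (((n + 1).choose k * (n + 1 - k) : ℕ) : ℚ) := by
      exact_mod_cast congrArg (Nat.cast : ℕ → ℚ) h0
    push_cast [h] at h1
    linarith
  · have h1 : (n + 1).choose k = 0 := Nat.choose_eq_zero_of_lt h
    have h2 : n.choose k = 0 := Nat.choose_eq_zero_of_lt (by omega)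
    simp [h1, h2]

lemma cast_choose5 (n k : ℕ) :
    ((k : ℚ) + 1) * (((n + 2).choose (k + 1) : ℚ)) = ((n : ℚ) + 2 - k) * (((n + 2).choose k : ℚ)) := by
  rcases le_or_gt k (n + 2) with h | h
  · have h0 := Nat.choose_succ_right_eq (n + 2) k
    have h1 : (((n+2).choose (k+1) * (k + 1) : ℕ) : ℚ) = (((n+2).choose k * (n + 2 - k) : ℕ) : ℚ) := by
      exact_mod_cast congrArg (Nat.cast : ℕ → ℚ) h0
    push_cast [h] at h1
    linarith
  · have h1 : (n + 2).choose (k + 1) = 0 := Nat.choose_eq_zero_of_lt (by omega)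
    have h2 : (n + 2).choose k = 0 := Nat.choose_eq_zero_of_lt h
    simp [h1, h2]

lemma cast_choose3 (n k : ℕ) :
    ((n : ℚ) + 1) * (((n + 1 + k).choose k : ℚ)) = ((n : ℚ) + 1 + k) * (((n + k).choose k : ℚ)) := by
  have h0 := Nat.add_one_mul_choose_eq (n + k) n
  have e1 : (n + k).choose n = (n + k).choose k := by
    rw [← Nat.choose_symm (Nat.le_add_right n k)]; congr 1; omega
  have e2 : (n + k).succ.choose n.succ = (n + 1 + k).choose k := by
    rw [← Nat.choose_symm (by omega : n.succ ≤ (n+k).succ)]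
    congr 1 <;> omega
  rw [e1, e2] at h0
  have h1 : (((n + k).succ * (n+k).choose k : ℕ) : ℚ) = (((n + 1 + k).choose k * n.succ : ℕ) : ℚ) :=
    by exact_mod_cast congrArg (Nat.cast : ℕ → ℚ) h0
  push_cast at h1
  linarith

lemma cast_choose6 (n k : ℕ) :
    ((k : ℚ) + 1) * (((n + k + 1).choose (k + 1) : ℚ)) = ((n : ℚ) + k + 1) * (((n + k).choose k : ℚ)) := by
  have h0 := Nat.add_one_mul_choose_eq (n + k) k
  have h1 : (((n + k).succ * (n+k).choose k : ℕ) : ℚ) = (((n+k).succ.choose k.succ * k.succ : ℕ) : ℚ) :=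
    by exact_mod_cast congrArg (Nat.cast : ℕ → ℚ) h0
  push_cast at h1
  have : (((n + k).succ.choose k.succ : ℚ)) = (((n + k + 1).choose (k+1) : ℚ)) := by norm_num
  rw [this] at h1
  linarith

lemma apery_key (n k : ℕ) :
    ((n:ℚ)+1)^2 * ((n:ℚ)+2)^2 *
      ( ((n:ℚ)+2)^3 * aperyB (n+2) k
        - (2*(n:ℚ)+3) * (17*(n:ℚ)^2+51*(n:ℚ)+39) * aperyB (n+1) k
        + ((n:ℚ)+1)^3 * aperyB n k )
    = aperyG n (k+1) - aperyG n k := by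
  have e1 : n + 1 + 1 = n + 2 := rfl
  have e2 : n + 1 + 1 + k = n + 2 + k := rfl
  have e3 : n + (k + 1) = n + k + 1 := rfl
  simp only [aperyB, aperyG, e1, e2, e3]
  set N := (n : ℚ) with hN
  set K := (k : ℚ) with hK
  have hN1 : N + 1 ≠ 0 := by positivity
  have hN2 : N + 2 ≠ 0 := by positivity
  have hK1 : K + 1 ≠ 0 := by positivity
  have hNK1 : N + 1 + K ≠ 0 := by positivity
  have hNK2 : N + 2 + K ≠ 0 := by positivity
  set c := (((n+2).choose k : ℚ)) with hc
  set w := (((n+2+k).choose k : ℚ)) with hw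
  have h1 : (N + 2 - K) * c = (N + 2) * (((n+1).choose k : ℚ)) := by
    have := cast_choose1 (n+1) k; push_cast at this; rw [e1] at this
    linarith [this]
  have hb : (((n+1).choose k : ℚ)) = (N + 2 - K) * c / (N + 2) := by
    field_simp; linarith [h1]
  have h2 : (N + 1 - K) * (((n+1).choose k : ℚ)) = (N + 1) * ((n.choose k : ℚ)) := by
    have := cast_choose1 n k; push_cast at this; linarith [this]
  have ha : ((n.choose k : ℚ)) = (N+1-K) * (N+2-K) * c / ((N+1) * (N+2)) := by
    rw [hb] at h2; field_simp at h2 ⊢; linarith [h2]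
  have h3 : (N + 2) * w = (N + 2 + K) * (((n+1+k).choose k : ℚ)) := by
    have := cast_choose3 (n+1) k; push_cast at this; rw [e1, e2] at this
    linarith [this]
  have hv : (((n+1+k).choose k : ℚ)) = (N + 2) * w / (N + 2 + K) := by
    field_simp; linarith [h3]
  have h4 : (N + 1) * (((n+1+k).choose k : ℚ)) = (N + 1 + K) * (((n+k).choose k : ℚ)) := by
    have := cast_choose3 n k; push_cast at this; linarith [this]
  have hu : (((n+k).choose k : ℚ)) = (N+1) * (N+2) * w / ((N+1+K) * (N+2+K)) := by
    rw [hv] at h4; field_simp at h4 ⊢; linarith [h4]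
  have h5 : (K + 1) * (((n+2).choose (k+1) : ℚ)) = (N + 2 - K) * c := by
    have := cast_choose5 n k; push_cast at this; linarith [this]
  have ha' : (((n+2).choose (k+1) : ℚ)) = (N + 2 - K) * c / (K + 1) := by
    field_simp; linarith [h5]
  have h6 : (K + 1) * (((n+k+1).choose (k+1) : ℚ)) = (N + K + 1) * (((n+k).choose k : ℚ)) := by
    have := cast_choose6 n k; push_cast at this; linarith [this]
  have hu' : (((n+k+1).choose (k+1) : ℚ)) = (N+1) * (N+2) * w / ((K+1) * (N+2+K)) := by
    rw [hu] at h6; field_simp at h6 ⊢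
    have h7 := mul_left_cancel₀ hNK1
      (show (N+1+K) * ((K+1) * (((n+k+1).choose (k+1) : ℚ)) * (N+2+K))
          = (N+1+K) * ((N+1) * (N+2) * w) by linear_combination h6)
    linear_combination h7
  rw [hb, ha, hv, hu, ha', hu']
  push_cast
  field_simp
  ring

lemma apery_eq_sum (m n : ℕ) (hm : m ≤ n + 2) :
    ((apery m : ℚ)) = ∑ k ∈ range (n + 3), aperyB m k := by
  have h1 : ((apery m : ℚ)) = ∑ k ∈ range (m + 1), aperyB m k := by
    simp only [apery, aperyB]
    push_cast
    rfl
  rw [h1]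
  apply Finset.sum_subset (Finset.range_subset_range.mpr (by omega))
  intro k _ hk
  have : m < k := by simpa using Nat.lt_of_succ_le (by simpa [Nat.succ_le_iff] using
    (by simpa using hk : ¬ k < m + 1))
  simp [aperyB, Nat.choose_eq_zero_of_lt this]

lemma apery_rec (n : ℕ) :
    ((n:ℚ)+2)^3 * (apery (n+2) : ℚ)
      = (2*(n:ℚ)+3) * (17*(n:ℚ)^2+51*(n:ℚ)+39) * (apery (n+1) : ℚ)
        - ((n:ℚ)+1)^3 * (apery n : ℚ) := by
  set N := (n : ℚ) with hN
  have h2 : ((N+1)^2 * (N+2)^2) *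
      ( (N+2)^3 * (apery (n+2) : ℚ)
        - (2*N+3) * (17*N^2+51*N+39) * (apery (n+1) : ℚ)
        + (N+1)^3 * (apery n : ℚ) ) = 0 := by
    rw [apery_eq_sum (n+2) n (le_refl _), apery_eq_sum (n+1) n (by omega),
      apery_eq_sum n n (by omega)]
    have hd : (N+2)^3 * (∑ k ∈ range (n+3), aperyB (n+2) k)
        - (2*N+3) * (17*N^2+51*N+39) * (∑ k ∈ range (n+3), aperyB (n+1) k)
        + (N+1)^3 * (∑ k ∈ range (n+3), aperyB n k)
        = ∑ k ∈ range (n+3),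
            ((N+2)^3 * aperyB (n+2) k
              - (2*N+3) * (17*N^2+51*N+39) * aperyB (n+1) k
              + (N+1)^3 * aperyB n k) := by
      rw [Finset.mul_sum, Finset.mul_sum, Finset.mul_sum, ← Finset.sum_sub_distrib,
        ← Finset.sum_add_distrib]
    rw [hd, Finset.mul_sum]
    calc ∑ k ∈ range (n+3), ((N+1)^2 * (N+2)^2 *
            ((N+2)^3 * aperyB (n+2) k
              - (2*N+3) * (17*N^2+51*N+39) * aperyB (n+1) k
              + (N+1)^3 * aperyB n k))
        = ∑ k ∈ range (n+3), (aperyG n (k+1) - aperyG n k) :=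
          Finset.sum_congr rfl fun k _ => apery_key n k
      _ = aperyG n (n+3) - aperyG n 0 := Finset.sum_range_sub _ _
      _ = 0 := by
          have : (n+2).choose (n+3) = 0 := Nat.choose_eq_zero_of_lt (by omega)
          simp [aperyG, this]
  have hM : ((N+1)^2 * (N+2)^2) ≠ 0 := by positivity
  have h3 := (mul_eq_zero.mp h2).resolve_left hM
  linarith


theorem apery_alternating_telescoped_sum (x : Polynomial ℚ) (n : ℕ) (hn : 1 ≤ n) :
    ∑ k ∈ Finset.range n,
      ((k : ℚ) ^ 3 * x.eval ((k : ℚ) - 2)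
        + (2 * (k : ℚ) + 1) * (17 * (k : ℚ) ^ 2 + 17 * k + 5) * x.eval ((k : ℚ) - 1)
        + ((k : ℚ) + 1) ^ 3 * x.eval (k : ℚ)) * ((-1 : ℚ) ^ k * (apery k : ℚ))
      = (n : ℚ) ^ 3 *
          (x.eval ((n : ℚ) - 1) * ((-1 : ℚ) ^ (n - 1) * (apery (n - 1) : ℚ))
            - x.eval ((n : ℚ) - 2) * ((-1 : ℚ) ^ n * (apery n : ℚ))) := by
  induction n, hn using Nat.le_induction with
  | base =>
      have h0 : apery 0 = 1 := by simp [apery]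
      have h1 : apery 1 = 5 := by norm_num [apery, Finset.sum_range_succ]
      rw [Finset.sum_range_one]
      norm_num [h0, h1]
      ring
  | succ m hm ih =>
      obtain ⟨p, rfl⟩ : ∃ p, m = p + 1 := ⟨m - 1, by omega⟩
      rw [Finset.sum_range_succ, ih]
      have e1 : p + 1 - 1 = p := rfl
      have e2 : p + 1 + 1 - 1 = p + 1 := rfl
      rw [e1, e2]
      push_cast
      rw [show ((p:ℚ) + 1 - 2) = (p:ℚ) - 1 from by ring,
        show ((p:ℚ) + 1 - 1) = (p:ℚ) from by ring,
        show ((p:ℚ) + 1 + 1 - 1) = (p:ℚ) + 1 from by ring,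
        show ((p:ℚ) + 1 + 1 - 2) = (p:ℚ) from by ring,
        pow_succ ((-1:ℚ)) (p+1), pow_succ ((-1:ℚ)) p]
      have hrec := apery_rec p
      linear_combination ((-1:ℚ)^p * x.eval ((p:ℚ))) * hrec
end

section
/- Fix z ∈ ℤ. For every polynomial x with integer coefficients and every integer n ≥ 1, the integer n divides ∑_{k=0}^{n−1} [ k x(k−2) − (2k+1)(2z+1) x(k−1) + (k+1) x(k) ] · D_k(z), where x is evaluated at the indicated integers (which may be negative). -/
open Finset Polynomial

/-- The central Delannoy polynomials `D k (z) = ∑_{i=0}^k (k choose i) ((k+i) choose i) z^i`. -/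
def delannoy (k : ℕ) (z : ℤ) : ℤ :=
  ∑ i ∈ Finset.range (k + 1), (k.choose i : ℤ) * ((k + i).choose i : ℤ) * z ^ i

/-- WZ certificate function for the Delannoy three-term recurrence. -/
def delG (z : ℚ) (k : ℕ) : ℕ → ℚ
  | 0 => 0
  | (j+1) => -2*(2*(k:ℚ)+3)*((k:ℚ)+j+1)/((k:ℚ)+1)
      * ((k+1).choose j : ℕ) * ((k+j).choose j : ℕ) * z^(j+1)

lemma delannoy_point_top1 (z : ℚ) (k : ℕ) :
    ((k:ℚ)+2) * ((k+2).choose (k+1) : ℕ) * (((k+2)+(k+1)).choose (k+1) : ℕ) * z^(k+1)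
    - (2*(k:ℚ)+3)*(2*z+1) * ((k+1).choose (k+1) : ℕ) * (((k+1)+(k+1)).choose (k+1) : ℕ) * z^(k+1)
    + ((k:ℚ)+1) * (k.choose (k+1) : ℕ) * ((k+(k+1)).choose (k+1) : ℕ) * z^(k+1)
    = delG z k (k+2) - delG z k (k+1) := by
  simp only [delG]
  have hk1 : ((k:ℚ)+1) ≠ 0 := by positivity
  have u1 := Nat.add_one_mul_choose_eq (k+k) k
  rw [show k+k+1 = k+(k+1) by omega, show k+1 = k+1 from rfl] at u1
  have u2 := Nat.choose_mul_succ_eq (k+(k+1)) (k+1)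
  rw [show k+(k+1)+1 - (k+1) = k+1 by omega, show k+(k+1)+1 = (k+1)+(k+1) by omega] at u2
  have u3 := Nat.choose_mul_succ_eq ((k+1)+(k+1)) (k+1)
  rw [show (k+1)+(k+1)+1 - (k+1) = k+2 by omega, show (k+1)+(k+1)+1 = (k+2)+(k+1) by omega] at u3
  have t1 := congrArg (Nat.cast (R := ℚ)) u1; push_cast at t1
  have t2 := congrArg (Nat.cast (R := ℚ)) u2; push_cast at t2
  have t3 := congrArg (Nat.cast (R := ℚ)) u3; push_cast at t3
  have ea : ((k+(k+1)).choose (k+1) : ℚ) = (2*(k:ℚ)+1) * ((k+k).choose k : ℕ) / ((k:ℚ)+1) := by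
    rw [eq_div_iff hk1]; linear_combination -t1
  have eb : (((k+1)+(k+1)).choose (k+1) : ℚ)
      = (2*(k:ℚ)+2) * ((2*(k:ℚ)+1) * ((k+k).choose k : ℕ)) / (((k:ℚ)+1)*((k:ℚ)+1)) := by
    rw [eq_div_iff (by positivity)]
    linear_combination -((k:ℚ)+1)*t2 - (2*(k:ℚ)+2)*t1
  have ec : (((k+2)+(k+1)).choose (k+1) : ℚ)
      = (2*(k:ℚ)+3) * ((2*(k:ℚ)+2) * ((2*(k:ℚ)+1) * ((k+k).choose k : ℕ)))
        / (((k:ℚ)+2)*(((k:ℚ)+1)*((k:ℚ)+1))) := by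
    rw [eq_div_iff (by positivity)]
    linear_combination -((k:ℚ)+1)*((k:ℚ)+1)*t3 - (2*(k:ℚ)+3)*((k:ℚ)+1)*t2 - (2*(k:ℚ)+3)*(2*(k:ℚ)+2)*t1
  rw [ea, eb, ec, Nat.choose_self, Nat.choose_succ_self,
      show k+2 = (k+1)+1 from rfl, Nat.choose_succ_self_right]
  simp only [Nat.choose_succ_self_right]
  push_cast
  field_simp
  ring

lemma delannoy_point_top2 (z : ℚ) (k : ℕ) :
    ((k:ℚ)+2) * ((k+2).choose (k+2) : ℕ) * (((k+2)+(k+2)).choose (k+2) : ℕ) * z^(k+2)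
    - (2*(k:ℚ)+3)*(2*z+1) * ((k+1).choose (k+2) : ℕ) * (((k+1)+(k+2)).choose (k+2) : ℕ) * z^(k+2)
    + ((k:ℚ)+1) * (k.choose (k+2) : ℕ) * ((k+(k+2)).choose (k+2) : ℕ) * z^(k+2)
    = delG z k (k+3) - delG z k (k+2) := by
  simp only [delG]
  have hk1 : ((k:ℚ)+1) ≠ 0 := by positivity
  have v1 := Nat.choose_mul_succ_eq (k+(k+1)) (k+1)
  rw [show k+(k+1)+1 - (k+1) = k+1 by omega, show k+(k+1)+1 = (k+1)+(k+1) by omega] at v1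
  have v2 := Nat.add_one_mul_choose_eq ((k+1)+(k+1)) (k+1)
  rw [show (k+1)+(k+1)+1 = (k+1)+(k+1)+1 from rfl, show (k+1)+1 = k+2 from rfl] at v2
  have v3 := Nat.choose_mul_succ_eq ((k+1)+(k+1)+1) (k+2)
  rw [show (k+1)+(k+1)+1+1 - (k+2) = k+2 by omega, show (k+1)+(k+1)+1+1 = (k+2)+(k+2) by omega] at v3
  have t1 := congrArg (Nat.cast (R := ℚ)) v1; push_cast at t1
  have t2 := congrArg (Nat.cast (R := ℚ)) v2; push_cast at t2
  have t3 := congrArg (Nat.cast (R := ℚ)) v3; push_cast at t3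
  rw [Nat.choose_self, Nat.choose_self, Nat.choose_eq_zero_of_lt (by omega : k+1 < k+2),
      Nat.choose_eq_zero_of_lt (by omega : k < k+2)]
  push_cast
  field_simp
  linear_combination (-((k:ℚ)+1)*t3 - 2*((k:ℚ)+1)*t2 - 2*(2*(k:ℚ)+3)*t1) * z^(k+2)

lemma delannoy_point (z : ℚ) (k i : ℕ) :
    ((k:ℚ)+2) * ((k+2).choose i : ℕ) * (((k+2)+i).choose i : ℕ) * z^i
    - (2*(k:ℚ)+3)*(2*z+1) * ((k+1).choose i : ℕ) * (((k+1)+i).choose i : ℕ) * z^i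
    + ((k:ℚ)+1) * (k.choose i : ℕ) * ((k+i).choose i : ℕ) * z^i
    = delG z k (i+1) - delG z k i := by
  have hk1 : ((k:ℚ)+1) ≠ 0 := by positivity
  rcases i with _ | j
  · simp only [delG, Nat.choose_zero_right, Nat.cast_one, pow_zero, Nat.cast_zero]
    field_simp
    ring
  rcases le_or_gt (j+1) k with hle | hlt
  · -- main case i = j+1 ≤ k
    obtain ⟨d, rfl⟩ : ∃ d, k = j + 1 + d := ⟨k - (j+1), by omega⟩
    simp only [delG]
    have h1 := Nat.choose_mul_succ_eq (j+1+d) (j+1)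
    rw [show j+1+d+1 - (j+1) = d+1 by omega] at h1
    have h2 := Nat.choose_mul_succ_eq (j+1+d+1) (j+1)
    rw [show j+1+d+1+1 - (j+1) = d+2 by omega, show j+1+d+1+1 = j+1+d+2 by omega] at h2
    have h3 := Nat.choose_mul_succ_eq (j+1+d+(j+1)) (j+1)
    rw [show j+1+d+(j+1)+1 - (j+1) = j+d+2 by omega,
        show j+1+d+(j+1)+1 = j+1+d+1+(j+1) by omega] at h3
    have h4 := Nat.choose_mul_succ_eq (j+1+d+1+(j+1)) (j+1)
    rw [show j+1+d+1+(j+1)+1 - (j+1) = j+d+3 by omega,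
        show j+1+d+1+(j+1)+1 = j+1+d+2+(j+1) by omega] at h4
    have h5 := Nat.choose_succ_right_eq (j+1+d+1) j
    rw [show j+1+d+1 - j = d+2 by omega] at h5
    have h6 := Nat.add_one_mul_choose_eq (j+1+d+j) j
    rw [show j+1+d+j+1 = j+1+d+(j+1) by omega, show j+1 = j+1 from rfl] at h6
    have t1 := congrArg (Nat.cast (R := ℚ)) h1; push_cast at t1
    have t2 := congrArg (Nat.cast (R := ℚ)) h2; push_cast at t2
    have t3 := congrArg (Nat.cast (R := ℚ)) h3; push_cast at t3
    have t4 := congrArg (Nat.cast (R := ℚ)) h4; push_cast at t4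
    have t5 := congrArg (Nat.cast (R := ℚ)) h5; push_cast at t5
    have t6 := congrArg (Nat.cast (R := ℚ)) h6; push_cast at t6
    have hd1 : ((d:ℚ)+1) ≠ 0 := by positivity
    have hd2 : ((d:ℚ)+2) ≠ 0 := by positivity
    have hj1 : ((j:ℚ)+1) ≠ 0 := by positivity
    have hjd2 : ((j:ℚ)+d+2) ≠ 0 := by positivity
    have hjd3 : ((j:ℚ)+d+3) ≠ 0 := by positivity
    have h2jd : (2*(j:ℚ)+d+2) ≠ 0 := by positivity
    have e3 : ((j+1+d+1).choose (j+1) : ℚ)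
        = ((j:ℚ)+d+2) * ((j+1+d).choose (j+1) : ℕ) / ((d:ℚ)+1) := by
      rw [eq_div_iff hd1]; linear_combination -t1
    have e1 : ((j+1+d+2).choose (j+1) : ℚ)
        = ((j:ℚ)+d+3) * (((j:ℚ)+d+2) * ((j+1+d).choose (j+1) : ℕ)) / (((d:ℚ)+2) * ((d:ℚ)+1)) := by
      rw [eq_div_iff (by positivity)]
      linear_combination -((j:ℚ)+d+3)*t1 - ((d:ℚ)+1)*t2
    have e4 : ((j+1+d+1+(j+1)).choose (j+1) : ℚ)
        = (2*(j:ℚ)+d+3) * ((j+1+d+(j+1)).choose (j+1) : ℕ) / ((j:ℚ)+d+2) := by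
      rw [eq_div_iff hjd2]; linear_combination -t3
    have e2 : ((j+1+d+2+(j+1)).choose (j+1) : ℚ)
        = (2*(j:ℚ)+d+4) * ((2*(j:ℚ)+d+3) * ((j+1+d+(j+1)).choose (j+1) : ℕ))
          / (((j:ℚ)+d+3) * ((j:ℚ)+d+2)) := by
      rw [eq_div_iff (by positivity)]
      linear_combination -((j:ℚ)+d+2)*t4 - (2*(j:ℚ)+d+4)*t3
    have e6 : ((j+1+d+1).choose j : ℚ)
        = ((j:ℚ)+1) * (((j:ℚ)+d+2) * ((j+1+d).choose (j+1) : ℕ)) / (((d:ℚ)+2) * ((d:ℚ)+1)) := by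
      rw [eq_div_iff (by positivity)]
      linear_combination -((d:ℚ)+1)*t5 - ((j:ℚ)+1)*t1
    have e7 : ((j+1+d+j).choose j : ℚ)
        = ((j:ℚ)+1) * ((j+1+d+(j+1)).choose (j+1) : ℕ) / (2*(j:ℚ)+d+2) := by
      rw [eq_div_iff h2jd]; linear_combination t6
    rw [e1, e2, e3, e4, e6, e7]
    push_cast
    field_simp
    ring
  rcases (show k = j ∨ k + 1 = j ∨ k + 2 ≤ j by omega) with rfl | rfl | h'
  · exact delannoy_point_top1 z k
  · exact delannoy_point_top2 z k
  · -- case i ≥ k+3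
    simp only [delG]
    rw [Nat.choose_eq_zero_of_lt (by omega : k+2 < j+1),
        Nat.choose_eq_zero_of_lt (by omega : k+1 < j+1),
        Nat.choose_eq_zero_of_lt (by omega : k < j+1),
        Nat.choose_eq_zero_of_lt (by omega : k+1 < j)]
    simp

/-- The three-term recurrence for the central Delannoy polynomials. -/
lemma delannoy_rec (z : ℤ) (k : ℕ) :
    ((k:ℤ)+2) * delannoy (k+2) z
      = (2*(k:ℤ)+3)*(2*z+1) * delannoy (k+1) z - ((k:ℤ)+1) * delannoy k z := by
  have key : ∑ i ∈ Finset.range (k+3),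
      (((k:ℚ)+2) * ((k+2).choose i : ℕ) * (((k+2)+i).choose i : ℕ) * (z:ℚ)^i
      - (2*(k:ℚ)+3)*(2*(z:ℚ)+1) * ((k+1).choose i : ℕ) * (((k+1)+i).choose i : ℕ) * (z:ℚ)^i
      + ((k:ℚ)+1) * (k.choose i : ℕ) * ((k+i).choose i : ℕ) * (z:ℚ)^i) = 0 := by
    rw [Finset.sum_congr rfl (fun i _ => delannoy_point (z:ℚ) k i), Finset.sum_range_sub]
    simp [delG, Nat.choose_eq_zero_of_lt (show k+1 < k+2 by omega)]
  have c2 : ((delannoy (k+2) z : ℤ) : ℚ)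
      = ∑ i ∈ Finset.range (k+3), ((k+2).choose i : ℚ) * (((k+2)+i).choose i : ℚ) * (z:ℚ)^i := by
    rw [delannoy]; push_cast; rfl
  have c1' : ((delannoy (k+1) z : ℤ) : ℚ)
      = ∑ i ∈ Finset.range (k+2), ((k+1).choose i : ℚ) * (((k+1)+i).choose i : ℚ) * (z:ℚ)^i := by
    rw [delannoy]; push_cast; rfl
  have c1 : ((delannoy (k+1) z : ℤ) : ℚ)
      = ∑ i ∈ Finset.range (k+3), ((k+1).choose i : ℚ) * (((k+1)+i).choose i : ℚ) * (z:ℚ)^i := by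
    rw [c1']
    apply Finset.sum_subset (Finset.range_subset_range.2 (by omega))
    intro i hi hni
    rw [Finset.mem_range] at hni
    rw [Nat.choose_eq_zero_of_lt (by omega : k+1 < i)]
    simp
  have c0' : ((delannoy k z : ℤ) : ℚ)
      = ∑ i ∈ Finset.range (k+1), ((k).choose i : ℚ) * (((k)+i).choose i : ℚ) * (z:ℚ)^i := by
    rw [delannoy]; push_cast; rfl
  have c0 : ((delannoy k z : ℤ) : ℚ)
      = ∑ i ∈ Finset.range (k+3), ((k).choose i : ℚ) * (((k)+i).choose i : ℚ) * (z:ℚ)^i := by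
    rw [c0']
    apply Finset.sum_subset (Finset.range_subset_range.2 (by omega))
    intro i hi hni
    rw [Finset.mem_range] at hni
    rw [Nat.choose_eq_zero_of_lt (by omega : k < i)]
    simp
  have final : ((k:ℚ)+2) * ((delannoy (k+2) z : ℤ) : ℚ)
      = (2*(k:ℚ)+3)*(2*(z:ℚ)+1) * ((delannoy (k+1) z : ℤ) : ℚ)
        - ((k:ℚ)+1) * ((delannoy k z : ℤ) : ℚ) := by
    rw [c2, c1, c0, Finset.mul_sum, Finset.mul_sum, Finset.mul_sum, ← Finset.sum_sub_distrib]
    rw [← sub_eq_zero, ← Finset.sum_sub_distrib, ← key]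
    exact Finset.sum_congr rfl fun i _ => by ring
  exact_mod_cast final

lemma delannoy_key (z : ℤ) (x : Polynomial ℤ) (m : ℕ) :
    ∑ k ∈ Finset.range (m+1),
      ((k : ℤ) * x.eval ((k : ℤ) - 2)
        - (2 * (k : ℤ) + 1) * (2 * z + 1) * x.eval ((k : ℤ) - 1)
        + ((k : ℤ) + 1) * x.eval (k : ℤ)) * delannoy k z
    = ((m:ℤ)+1) * (x.eval (m : ℤ) * delannoy m z
        - x.eval ((m:ℤ)-1) * delannoy (m+1) z) := by
  induction m with
  | zero =>
    have d0 : delannoy 0 z = 1 := by simp [delannoy]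
    have d1 : delannoy 1 z = 2*z+1 := by
      simp [delannoy, Finset.sum_range_succ]; ring
    norm_num [Finset.sum_range_one, d0, d1]
    ring
  | succ m ih =>
    rw [Finset.sum_range_succ, ih]
    have hrec := delannoy_rec z m
    push_cast
    rw [show ((m:ℤ)+1-2) = (m:ℤ)-1 by ring, show ((m:ℤ)+1-1) = (m:ℤ) by ring]
    linear_combination x.eval (m:ℤ) * hrec

theorem delannoy_sum_divisible (z : ℤ) (x : Polynomial ℤ) (n : ℕ) (hn : 1 ≤ n) :
    (n : ℤ) ∣ ∑ k ∈ Finset.range n,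
      ((k : ℤ) * x.eval ((k : ℤ) - 2)
        - (2 * (k : ℤ) + 1) * (2 * z + 1) * x.eval ((k : ℤ) - 1)
        + ((k : ℤ) + 1) * x.eval (k : ℤ)) * delannoy k z := by
  obtain ⟨m, rfl⟩ : ∃ m, n = m + 1 := ⟨n - 1, by omega⟩
  rw [delannoy_key]
  have hc : ((m+1 : ℕ) : ℤ) = (m:ℤ)+1 := by push_cast; ring
  rw [hc]
  exact dvd_mul_right _ _
end
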